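/- Let L be the Laplacian of a directed graph on N nodes with row-stochastic-normalized adjacency (each nonzero row of the adjacency matrix has entries 1/|N_i| on the neighbors of i), let k ∈ [0,1]^N, K₁ = diag(k_i²), K₂ = diag((1-k_i)²), and M = -(K₁ + K₂ L). Then M is Hurwitz (all eigenvalues have strictly negative real part) if and only if there exists a minimal root set R(L) of the graph such that k_j > 0 for all j ∈ R(L). -/

import Mathlib

open Matrix

/-- `M` is Hurwitz: every (complex) eigenvalue has strictly negative real part. -/
def IsHurwitz {N : ℕ} (M : Matrix (Fin N) (Fin N) ℝ) : Prop :=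
  ∀ μ ∈ (M.map (Complex.ofReal)).charpoly.roots, μ.re < 0

/-- `S` is a root set of the directed graph with neighbor sets `Nbr`:
from every node there is a directed path (along edges `i → j` for `j ∈ Nbr i`)
to some node of `S`. -/
def IsRootSet {N : ℕ} (Nbr : Fin N → Finset (Fin N)) (S : Finset (Fin N)) : Prop :=
  ∀ i : Fin N, ∃ j ∈ S, Relation.ReflTransGen (fun a b => b ∈ Nbr a) i j

/-- A minimal root set: a root set of smallest cardinality. -/
def IsMinimalRootSet {N : ℕ} (Nbr : Fin N → Finset (Fin N)) (S : Finset (Fin N)) : Prop :=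
  IsRootSet Nbr S ∧ ∀ T : Finset (Fin N), IsRootSet Nbr T → S.card ≤ T.card

namespace HurwitzAux

variable {N : ℕ} (Nbr : Fin N → Finset (Fin N))

/-- Reachability along directed edges. -/
abbrev RelR : Fin N → Fin N → Prop := Relation.ReflTransGen (fun a b => b ∈ Nbr a)

lemma closed_mem (T : Finset (Fin N)) (hT : ∀ i ∈ T, Nbr i ⊆ T) {a b : Fin N}
    (hab : RelR Nbr a b) (ha : a ∈ T) : b ∈ T := by
  induction hab with
  | refl => exact ha
  | tail h₁ h₂ ih => exact hT _ ih h₂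

open Classical in
/-- The set of nodes reachable from `i`. -/
noncomputable def reachSet (i : Fin N) : Finset (Fin N) :=
  Finset.univ.filter (fun j => RelR Nbr i j)

lemma mem_reachSet {i j : Fin N} : j ∈ reachSet Nbr i ↔ RelR Nbr i j := by
  simp [reachSet]

/-- A terminal node: every node reachable from it can reach it back. -/
def IsTerminal (i : Fin N) : Prop := ∀ j, RelR Nbr i j → RelR Nbr j i

lemma exists_terminal (i : Fin N) : ∃ t, RelR Nbr i t ∧ IsTerminal Nbr t := by
  classical
  suffices H : ∀ n (i : Fin N), (reachSet Nbr i).card ≤ n →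
      ∃ t, RelR Nbr i t ∧ IsTerminal Nbr t from H _ i le_rfl
  intro n
  induction n with
  | zero =>
    intro i hi
    exfalso
    have hmem : i ∈ reachSet Nbr i := (mem_reachSet Nbr).2 .refl
    have := Finset.card_pos.2 ⟨i, hmem⟩
    omega
  | succ n ih =>
    intro i hi
    by_cases hterm : IsTerminal Nbr i
    · exact ⟨i, .refl, hterm⟩
    · simp only [IsTerminal] at hterm
      push_neg at hterm
      obtain ⟨j, hij, hji⟩ := hterm
      have hsub : reachSet Nbr j ⊆ reachSet Nbr i := fun x hx =>
        (mem_reachSet Nbr).2 (hij.trans ((mem_reachSet Nbr).1 hx))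
      have hi_notmem : i ∉ reachSet Nbr j := fun h => hji ((mem_reachSet Nbr).1 h)
      have hlt : (reachSet Nbr j).card < (reachSet Nbr i).card :=
        Finset.card_lt_card ((Finset.ssubset_iff_of_subset hsub).2
          ⟨i, (mem_reachSet Nbr).2 .refl, hi_notmem⟩)
      obtain ⟨t, hjt, ht⟩ := ih j (by omega)
      exact ⟨t, hij.trans hjt, ht⟩

lemma reachSet_eq {t t' x : Fin N} (ht : IsTerminal Nbr t) (ht' : IsTerminal Nbr t')
    (h1 : RelR Nbr t x) (h2 : RelR Nbr t' x) : reachSet Nbr t = reachSet Nbr t' := by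
  have h3 : RelR Nbr t' t := h2.trans (ht x h1)
  have h4 : RelR Nbr t t' := ht' t h3
  ext j
  simp only [mem_reachSet]
  exact ⟨fun h => h3.trans h, fun h => h4.trans h⟩

lemma exists_minimal_rootset (P : Fin N → Prop)
    (hP : ∀ t, IsTerminal Nbr t → ∃ j, RelR Nbr t j ∧ P j) :
    ∃ S : Finset (Fin N), IsMinimalRootSet Nbr S ∧ ∀ j ∈ S, P j := by
  classical
  set 𝒞 : Finset (Finset (Fin N)) :=
    (Finset.univ.filter (IsTerminal Nbr)).image (reachSet Nbr) with h𝒞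
  have hterm𝒞 : ∀ C ∈ 𝒞, ∃ t, IsTerminal Nbr t ∧ reachSet Nbr t = C := by
    intro C hC
    obtain ⟨t, ht, rfl⟩ := Finset.mem_image.1 hC
    exact ⟨t, (Finset.mem_filter.1 ht).2, rfl⟩
  have hex : ∀ C ∈ 𝒞, ∃ j, j ∈ C ∧ P j := by
    intro C hC
    obtain ⟨t, ht, rfl⟩ := hterm𝒞 C hC
    obtain ⟨j, hj, hPj⟩ := hP t ht
    exact ⟨j, (mem_reachSet Nbr).2 hj, hPj⟩
  set S : Finset (Fin N) := 𝒞.attach.image (fun C => (hex C.1 C.2).choose) with hSdef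
  have hSmem : ∀ C (hC : C ∈ 𝒞), (hex C hC).choose ∈ S := fun C hC =>
    Finset.mem_image.2 ⟨⟨C, hC⟩, Finset.mem_attach _ _, rfl⟩
  have hSP : ∀ j ∈ S, P j := by
    intro j hj
    obtain ⟨C, -, rfl⟩ := Finset.mem_image.1 hj
    exact (hex C.1 C.2).choose_spec.2
  have hroot : IsRootSet Nbr S := by
    intro i
    obtain ⟨t, hit, ht⟩ := exists_terminal Nbr i
    have hC : reachSet Nbr t ∈ 𝒞 :=
      Finset.mem_image.2 ⟨t, Finset.mem_filter.2 ⟨Finset.mem_univ _, ht⟩, rfl⟩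
    refine ⟨(hex _ hC).choose, hSmem _ hC, ?_⟩
    exact hit.trans ((mem_reachSet Nbr).1 (hex _ hC).choose_spec.1)
  refine ⟨S, ⟨hroot, ?_⟩, hSP⟩
  intro T hT
  have h1 : S.card ≤ 𝒞.card := by
    rw [hSdef]
    exact Finset.card_image_le.trans (by rw [Finset.card_attach])
  have hTC : ∀ C ∈ 𝒞, ∃ j, j ∈ T ∧ j ∈ C := by
    intro C hC
    obtain ⟨t, ht, rfl⟩ := hterm𝒞 C hC
    obtain ⟨j, hjT, hjr⟩ := hT t
    exact ⟨j, hjT, (mem_reachSet Nbr).2 hjr⟩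
  rcases Finset.eq_empty_or_nonempty 𝒞 with hCemp | ⟨C0, hC0⟩
  · rw [hCemp] at h1
    simpa using h1.trans (Nat.zero_le _)
  obtain ⟨j0, hj0T, -⟩ := hTC C0 hC0
  set f : Finset (Fin N) → Fin N :=
    fun C => if h : ∃ j, j ∈ T ∧ j ∈ C then h.choose else j0 with hf
  have h2 : 𝒞.card ≤ T.card := by
    apply Finset.card_le_card_of_injOn f
    · intro C hC
      have h := hTC C hC
      simp only [hf, dif_pos h]
      exact h.choose_spec.1
    · intro C hC C' hC' hfe
      have h := hTC C hC
      have h' := hTC C' hC'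
      simp only [hf, dif_pos h, dif_pos h'] at hfe
      obtain ⟨t, ht, rfl⟩ := hterm𝒞 C hC
      obtain ⟨t', ht', rfl⟩ := hterm𝒞 C' hC'
      exact reachSet_eq Nbr ht ht'
        ((mem_reachSet Nbr).1 h.choose_spec.2)
        ((mem_reachSet Nbr).1 (hfe ▸ h'.choose_spec.2))
  exact h1.trans h2

/-- Evaluating the characteristic polynomial. -/
lemma eval_charpoly {n : Type*} [Fintype n] [DecidableEq n] {R : Type*} [CommRing R]
    (Q : Matrix n n R) (μ : R) :
    Q.charpoly.eval μ = (Matrix.diagonal (fun _ => μ) - Q).det := by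
  rw [Matrix.charpoly]
  rw [show Polynomial.eval μ = ⇑(Polynomial.evalRingHom μ) from rfl, RingHom.map_det]
  congr 1
  ext i j
  by_cases h : i = j
  · subst h
    simp [Matrix.charmatrix_apply_eq]
  · simp [Matrix.charmatrix_apply_ne _ _ _ h, Matrix.diagonal_apply_ne _ h]

end HurwitzAux
theorem hurwitz_iff_invested_minimal_root_set
    (N : ℕ) (hN : 0 < N)
    (Nbr : Fin N → Finset (Fin N)) (hirr : ∀ i, i ∉ Nbr i)
    (k : Fin N → ℝ) (hk : ∀ i, k i ∈ Set.Icc (0 : ℝ) 1)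
    (A L K₁ K₂ M : Matrix (Fin N) (Fin N) ℝ)
    (hA : ∀ i j, A i j = if j ∈ Nbr i then ((Nbr i).card : ℝ)⁻¹ else 0)
    (hL : L = Matrix.diagonal (fun i => ∑ j, A i j) - A)
    (hK₁ : K₁ = Matrix.diagonal (fun i => (k i) ^ 2))
    (hK₂ : K₂ = Matrix.diagonal (fun i => (1 - k i) ^ 2))
    (hM : M = -(K₁ + K₂ * L)) :
    IsHurwitz M ↔
      ∃ S : Finset (Fin N), IsMinimalRootSet Nbr S ∧ ∀ j ∈ S, 0 < k j := by
  classical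
  have hNE : Nonempty (Fin N) := ⟨⟨0, hN⟩⟩
  set d : Fin N → ℝ := fun i => ∑ j, A i j with hd
  have hAnn : ∀ i j, 0 ≤ A i j := by
    intro i j; rw [hA i j]; split_ifs
    · positivity
    · exact le_refl 0
  have hA0 : ∀ i, A i i = 0 := fun i => by rw [hA i i]; simp [hirr i]
  have hApos : ∀ i j, j ∈ Nbr i → 0 < A i j := by
    intro i j hj; rw [hA i j, if_pos hj]
    have : (0:ℝ) < (Nbr i).card := by exact_mod_cast Finset.card_pos.2 ⟨j, hj⟩
    positivity
  have hAzero : ∀ i j, j ∉ Nbr i → A i j = 0 := fun i j hj => by rw [hA i j, if_neg hj]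
  have hdnn : ∀ i, 0 ≤ d i := fun i => Finset.sum_nonneg fun j _ => hAnn i j
  set B : Matrix (Fin N) (Fin N) ℝ := K₁ + K₂ * L with hBdef
  have hMB : M = -B := hM
  have hB : ∀ i j, B i j =
      (if i = j then k i ^ 2 + (1 - k i) ^ 2 * d i else 0) - (1 - k i) ^ 2 * A i j := by
    intro i j
    rw [hBdef, hK₁, hK₂, hL]
    simp only [Matrix.add_apply, Matrix.diagonal_mul, Matrix.sub_apply, Matrix.diagonal_apply]
    split_ifs with h <;> ring
  have hrow : ∀ (x : Fin N → ℝ) i, (B *ᵥ x) i =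
      (k i ^ 2 + (1 - k i) ^ 2 * d i) * x i - (1 - k i) ^ 2 * ∑ j, A i j * x j := by
    intro x i
    show ∑ j, B i j * x j = _
    have h1 : ∀ j, B i j * x j =
        (if i = j then (k i ^ 2 + (1 - k i) ^ 2 * d i) * x j else 0)
          - (1 - k i) ^ 2 * (A i j * x j) := by
      intro j; rw [hB i j]; split_ifs <;> ring
    rw [Finset.sum_congr rfl fun j _ => h1 j, Finset.sum_sub_distrib, Finset.sum_ite_eq,
      ← Finset.mul_sum]
    simp
  -- complex versions
  set Bc : Matrix (Fin N) (Fin N) ℂ := B.map Complex.ofReal with hBc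
  have hBcHom : Bc = B.map Complex.ofRealHom := rfl
  have hMc : M.map Complex.ofReal = -Bc := by
    rw [hMB]; ext i j
    simp only [Matrix.map_apply, Matrix.neg_apply, Complex.ofReal_neg]
    rfl
  have hdetBc : Bc.det = (B.det : ℂ) := by
    rw [hBcHom, ← RingHom.mapMatrix_apply, ← RingHom.map_det]; rfl
  have h1 : B.det = 0 → ¬ IsHurwitz M := by
    intro hdet hH
    have hne : (M.map Complex.ofReal).charpoly ≠ 0 := (Matrix.charpoly_monic _).ne_zero
    have hroot0 : (0:ℂ) ∈ (M.map Complex.ofReal).charpoly.roots := by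
      rw [Polynomial.mem_roots']
      refine ⟨hne, ?_⟩
      show Polynomial.eval 0 _ = 0
      rw [HurwitzAux.eval_charpoly, hMc]
      have hdg : Matrix.diagonal (fun _ : Fin N => (0:ℂ)) = 0 := Matrix.diagonal_zero
      rw [hdg, zero_sub, neg_neg, hdetBc, hdet]
      simp
    have := hH 0 hroot0
    simp at this
  have h2 : B.det ≠ 0 → IsHurwitz M := by
    intro hdet μ hμ
    have hdetBc' : Bc.det ≠ 0 := by
      rw [hdetBc]
      exact_mod_cast hdet
    rw [Polynomial.mem_roots'] at hμ
    obtain ⟨-, hev⟩ := hμ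
    have hev' : (Matrix.diagonal (fun _ : Fin N => μ) + Bc).det = 0 := by
      have := hev
      rw [Polynomial.IsRoot, HurwitzAux.eval_charpoly, hMc, sub_neg_eq_add] at this
      exact this
    obtain ⟨v, hv0, hveq⟩ := Matrix.exists_mulVec_eq_zero_iff.2 hev'
    set lam : ℂ := -μ with hlam
    have hBv : ∀ i, (Bc *ᵥ v) i = lam * v i := by
      intro i
      have h := congrFun hveq i
      rw [Matrix.add_mulVec] at h
      have hdg : (Matrix.diagonal (fun _ : Fin N => μ) *ᵥ v) i = μ * v i := by
        rw [Matrix.mulVec_diagonal]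
      simp only [Pi.add_apply, Pi.zero_apply] at h
      rw [hdg] at h
      rw [hlam]
      linear_combination h
    obtain ⟨i, -, hmax⟩ := Finset.exists_max_image Finset.univ
      (fun i => ‖v i‖) Finset.univ_nonempty
    have hvi : 0 < ‖v i‖ := by
      obtain ⟨j, hj⟩ := Function.ne_iff.1 hv0
      exact lt_of_lt_of_le (by simpa using (norm_pos_iff.2 hj))
        (hmax j (Finset.mem_univ j))
    have hBcij : ∀ l j, Bc l j = ((B l j : ℝ) : ℂ) := fun l j => rfl
    have hrowC : ∑ j, Bc i j * v j = lam * v i := hBv i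
    have hsplit : (lam - (B i i : ℂ)) * v i = ∑ j ∈ Finset.univ \ {i}, Bc i j * v j := by
      have h := Finset.sum_eq_sum_sdiff_singleton_add (Finset.mem_univ i)
        (fun j => Bc i j * v j)
      rw [h, hBcij i i] at hrowC
      linear_combination -hrowC
    have hsumA : ∑ j ∈ Finset.univ \ {i}, A i j = d i := by
      rw [hd]
      apply Finset.sum_subset (Finset.sdiff_subset)
      intro j _ hj
      have : j = i := by
        simp only [Finset.mem_sdiff, Finset.mem_univ, true_and, Finset.mem_singleton,
          not_not] at hj
        exact hj
      rw [this, hA0]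
    have habs : ‖lam - (B i i : ℂ)‖ * ‖v i‖
        ≤ ((1 - k i)^2 * d i) * ‖v i‖ := by
      rw [← norm_mul, hsplit]
      calc ‖∑ j ∈ Finset.univ \ {i}, Bc i j * v j‖
          ≤ ∑ j ∈ Finset.univ \ {i}, ‖Bc i j * v j‖ :=
            norm_sum_le _ _
        _ ≤ ∑ j ∈ Finset.univ \ {i}, ((1 - k i)^2 * A i j) * ‖v i‖ := by
            apply Finset.sum_le_sum
            intro j hj
            have hji : ¬ (i = j) := by
              simp only [Finset.mem_sdiff, Finset.mem_univ, true_and,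
                Finset.mem_singleton] at hj
              exact fun h => hj h.symm
            have habsB : ‖Bc i j‖ = (1 - k i)^2 * A i j := by
              rw [hBcij i j, Complex.norm_real, Real.norm_eq_abs, hB i j, if_neg hji, zero_sub, abs_neg,
                abs_of_nonneg (mul_nonneg (sq_nonneg _) (hAnn i j))]
            rw [norm_mul, habsB]
            exact mul_le_mul_of_nonneg_left (hmax j (Finset.mem_univ j))
              (mul_nonneg (sq_nonneg _) (hAnn i j))
        _ = ((1 - k i)^2 * ∑ j ∈ Finset.univ \ {i}, A i j) * ‖v i‖ := by
            rw [Finset.mul_sum, Finset.sum_mul]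
            try exact Finset.sum_congr rfl fun j _ => by ring
        _ = ((1 - k i)^2 * d i) * ‖v i‖ := by rw [hsumA]
    have hle : ‖lam - (B i i : ℂ)‖ ≤ (1 - k i)^2 * d i :=
      le_of_mul_le_mul_right habs hvi
    have hBii : B i i = k i ^ 2 + (1 - k i)^2 * d i := by
      rw [hB i i, if_pos rfl, hA0 i]; ring
    by_contra hcon
    push_neg at hcon
    have hlamre : lam.re ≤ 0 := by
      rw [hlam]
      simp only [Complex.neg_re]
      linarith
    have hre : B i i - lam.re ≤ ‖lam - (B i i : ℂ)‖ := by
      have h1' := Complex.re_le_norm ((B i i : ℂ) - lam)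
      have h2' : ‖(B i i : ℂ) - lam‖ = ‖lam - (B i i : ℂ)‖ :=
        norm_sub_rev _ _
      have h3' : ((B i i : ℂ) - lam).re = B i i - lam.re := by
        simp [Complex.sub_re]
      rw [h2', h3'] at h1'
      exact h1'
    have hr_nonneg : (0:ℝ) ≤ (1 - k i)^2 * d i := mul_nonneg (sq_nonneg _) (hdnn i)
    have hra : (1 - k i)^2 * d i ≤ B i i := by
      rw [hBii]; nlinarith [sq_nonneg (k i)]
    have hlamre0 : lam.re = 0 := by
      have := hre.trans (hle.trans hra)
      linarith
    have hlamim0 : lam.im = 0 := by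
      have h1' : ‖lam - (B i i : ℂ)‖^2 ≤ ((1 - k i)^2 * d i)^2 :=
        pow_le_pow_left₀ (norm_nonneg _) hle 2
      have h2' : ((1 - k i)^2 * d i)^2 ≤ (B i i)^2 := pow_le_pow_left₀ hr_nonneg hra 2
      have h3' : ‖lam - (B i i : ℂ)‖^2 = (lam.re - B i i)^2 + lam.im^2 := by
        rw [Complex.sq_norm, Complex.normSq_apply]
        simp [Complex.sub_re, Complex.sub_im]
        try ring
      rw [hlamre0] at h3'
      nlinarith [sq_nonneg lam.im]
    have hlam0 : lam = 0 := Complex.ext hlamre0 hlamim0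
    have hker : Bc *ᵥ v = 0 := by
      funext j
      rw [hBv j, hlam0, zero_mul]
      rfl
    exact hdetBc' (Matrix.exists_mulVec_eq_zero_iff.1 ⟨v, hv0, hker⟩)
  have h3 : B.det = 0 → ∀ S, IsRootSet Nbr S → ∃ j ∈ S, k j = 0 := by
    intro hdet S hS
    obtain ⟨x, hx0, hxeq⟩ := Matrix.exists_mulVec_eq_zero_iff.2 hdet
    have hxy : ∃ y : Fin N → ℝ, (B *ᵥ y = 0) ∧ ∃ i, 0 < y i := by
      by_cases h : ∃ i, 0 < x i
      · exact ⟨x, hxeq, h⟩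
      · push_neg at h
        obtain ⟨i1, hi1⟩ := Function.ne_iff.1 hx0
        refine ⟨-x, by rw [Matrix.mulVec_neg, hxeq, neg_zero], i1, ?_⟩
        have hle := h i1
        have : x i1 < 0 := lt_of_le_of_ne hle hi1
        simpa using this
    obtain ⟨y, hyeq, ipos, hipos⟩ := hxy
    obtain ⟨i0, -, hmax⟩ := Finset.exists_max_image Finset.univ y Finset.univ_nonempty
    set m := y i0 with hm
    have hmpos : 0 < m := lt_of_lt_of_le hipos (hmax ipos (Finset.mem_univ _))
    set T : Finset (Fin N) := Finset.univ.filter (fun i => y i = m) with hT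
    have hmemT : ∀ i, i ∈ T ↔ y i = m := fun i => by simp [hT]
    have hTprop : ∀ i ∈ T, k i = 0 ∧ Nbr i ⊆ T := by
      intro i hiT
      have hyi : y i = m := (hmemT i).1 hiT
      have hrw := congrFun hyeq i
      rw [hrow y i] at hrw
      simp only [Pi.zero_apply] at hrw
      have hsum_le : ∑ j, A i j * y j ≤ d i * m := by
        have : ∀ j ∈ Finset.univ, A i j * y j ≤ A i j * m := fun j _ =>
          mul_le_mul_of_nonneg_left (hmax j (Finset.mem_univ j)) (hAnn i j)
        calc ∑ j, A i j * y j ≤ ∑ j, A i j * m := Finset.sum_le_sum this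
          _ = d i * m := by rw [hd, ← Finset.sum_mul]
      have hksq : k i = 0 := by
        have h1' : (1 - k i)^2 * (∑ j, A i j * y j) ≤ (1 - k i)^2 * (d i * m) :=
          mul_le_mul_of_nonneg_left hsum_le (sq_nonneg _)
        have h2' : k i ^ 2 * m ≤ 0 := by rw [hyi] at hrw; nlinarith
        have h3' : k i ^ 2 ≤ 0 := by nlinarith
        have : k i ^ 2 = 0 := le_antisymm h3' (sq_nonneg _)
        exact pow_eq_zero_iff two_ne_zero |>.1 this
      refine ⟨hksq, ?_⟩
      have heq : ∑ j, A i j * y j = d i * m := by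
        rw [hksq, hyi] at hrw
        norm_num at hrw
        linarith
      intro j hj
      rw [hmemT]
      by_contra hne
      have hlt : y j < m := lt_of_le_of_ne (hmax j (Finset.mem_univ j)) hne
      have hstrict : ∑ l, A i l * y l < d i * m := by
        have hs : ∑ l, A i l * y l < ∑ l, A i l * m :=
          Finset.sum_lt_sum
            (fun l _ => mul_le_mul_of_nonneg_left (hmax l (Finset.mem_univ l)) (hAnn i l))
            ⟨j, Finset.mem_univ j, mul_lt_mul_of_pos_left hlt (hApos i j hj)⟩
        calc ∑ l, A i l * y l < ∑ l, A i l * m := hs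
          _ = d i * m := by rw [hd, ← Finset.sum_mul]
      linarith
    have hclosedT : ∀ i ∈ T, Nbr i ⊆ T := fun i hi => (hTprop i hi).2
    have hi0T : i0 ∈ T := (hmemT i0).2 rfl
    obtain ⟨j, hjS, hreach⟩ := hS i0
    exact ⟨j, hjS, (hTprop j (HurwitzAux.closed_mem Nbr T hclosedT hreach hi0T)).1⟩
  have h4 : ∀ t : Fin N, HurwitzAux.IsTerminal Nbr t →
      (∀ j, HurwitzAux.RelR Nbr t j → k j = 0) → B.det = 0 := by
    intro t hterm hzero
    set C := HurwitzAux.reachSet Nbr t with hC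
    have htC : t ∈ C := (HurwitzAux.mem_reachSet Nbr).2 .refl
    have hclosed : ∀ i ∈ C, Nbr i ⊆ C := by
      intro i hi j hj
      exact (HurwitzAux.mem_reachSet Nbr).2 (((HurwitzAux.mem_reachSet Nbr).1 hi).tail hj)
    have hk0 : ∀ i ∈ C, k i = 0 := fun i hi => hzero i ((HurwitzAux.mem_reachSet Nbr).1 hi)
    set B' : Matrix {x // x ∈ C} {x // x ∈ C} ℝ := fun i j => B i.1 j.1 with hB'
    have hB'1 : B' *ᵥ (fun _ => (1:ℝ)) = 0 := by
      funext i
      show ∑ j : {x // x ∈ C}, B' i j * 1 = 0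
      simp only [mul_one]
      have hcoe : ∑ j : {x // x ∈ C}, B' i j = ∑ j ∈ C, B i.1 j :=
        Finset.sum_coe_sort C (fun j => B i.1 j)
      rw [hcoe]
      have hki : k i.1 = 0 := hk0 _ i.2
      have hform : ∀ j ∈ C, B i.1 j = (if i.1 = j then d i.1 else 0) - A i.1 j := by
        intro j _
        rw [hB i.1 j, hki]
        norm_num
      rw [Finset.sum_congr rfl hform, Finset.sum_sub_distrib]
      have e1 : ∑ j ∈ C, (if i.1 = j then d i.1 else 0) = d i.1 := by
        rw [Finset.sum_ite_eq]
        simp [i.2]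
      have e2 : ∑ j ∈ C, A i.1 j = d i.1 := by
        rw [hd]
        apply Finset.sum_subset (Finset.subset_univ C)
        intro j _ hjC
        exact hAzero _ _ (fun hmem => hjC (hclosed _ i.2 hmem))
      rw [e1, e2, sub_self]
    have hone : (fun _ : {x // x ∈ C} => (1:ℝ)) ≠ 0 := by
      intro h
      have := congrFun h ⟨t, htC⟩
      norm_num at this
    have hdet' : B'.det = 0 := Matrix.exists_mulVec_eq_zero_iff.1 ⟨_, hone, hB'1⟩
    have hdetT : B'ᵀ.det = 0 := by rw [Matrix.det_transpose]; exact hdet'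
    obtain ⟨y, hy0, hyeq⟩ := Matrix.exists_mulVec_eq_zero_iff.2 hdetT
    set yt : Fin N → ℝ := fun i => if h : i ∈ C then y ⟨i, h⟩ else 0 with hyt
    have hyt0 : yt ≠ 0 := by
      obtain ⟨i, hi⟩ := Function.ne_iff.1 hy0
      intro h
      apply hi
      have h2' := congrFun h i.1
      simp only [hyt, dif_pos i.2, Pi.zero_apply, Subtype.coe_eta] at h2'
      exact h2'
    have hBT : Bᵀ *ᵥ yt = 0 := by
      funext j
      show ∑ i : Fin N, Bᵀ j i * yt i = 0
      have hstep1 : ∑ i : Fin N, Bᵀ j i * yt i = ∑ i ∈ C, B i j * yt i := by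
        refine (Finset.sum_subset (Finset.subset_univ C) ?_).symm
        intro i _ hiC
        simp [hyt, dif_neg hiC]
      rw [hstep1, ← Finset.sum_coe_sort C (fun i => B i j * yt i)]
      have hstep2 : ∀ i : {x // x ∈ C}, B i.1 j * yt i.1 = B i.1 j * y i := by
        intro i
        simp [hyt, dif_pos i.2, Subtype.coe_eta]
      rw [Finset.sum_congr rfl (fun i _ => hstep2 i)]
      by_cases hjC : j ∈ C
      · have := congrFun hyeq ⟨j, hjC⟩
        simp [Matrix.mulVec, dotProduct, Matrix.transpose_apply, hB'] at this
        exact this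
      · apply Finset.sum_eq_zero
        intro i _
        have hBij : B i.1 j = 0 := by
          rw [hB i.1 j, if_neg (by rintro rfl; exact hjC i.2),
            hAzero _ _ (fun hm => hjC (hclosed _ i.2 hm))]
          ring
        rw [hBij, zero_mul]
    have hdT : Bᵀ.det = 0 := Matrix.exists_mulVec_eq_zero_iff.1 ⟨yt, hyt0, hBT⟩
    rw [Matrix.det_transpose] at hdT
    exact hdT
  constructor
  · intro hH
    by_contra hR
    have hnot : ¬ (∀ t, HurwitzAux.IsTerminal Nbr t →
        ∃ j, HurwitzAux.RelR Nbr t j ∧ 0 < k j) := fun h =>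
      hR (HurwitzAux.exists_minimal_rootset Nbr _ h)
    push_neg at hnot
    obtain ⟨t, hterm, hz⟩ := hnot
    have hz' : ∀ j, HurwitzAux.RelR Nbr t j → k j = 0 := fun j hj =>
      le_antisymm (hz j hj) (hk j).1
    exact h1 (h4 t hterm hz') hH
  · rintro ⟨S, hSmin, hSpos⟩
    apply h2
    intro hdet
    obtain ⟨j, hjS, hj0⟩ := h3 hdet S hSmin.1
    have := hSpos j hjS
    rw [hj0] at this
    exact lt_irrefl 0 this
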